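/- If E_i(t,x,x',x'') are the Euler-Lagrange expressions of a smooth Lagrangian L(t,x,x'), then for all i,j: ∂E_i/∂x'_j + ∂E_j/∂x'_i = 2 D_t(∂E_j/∂x''_i), where D_t = ∂/∂t + Σ_k x'_k ∂/∂x_k + Σ_k x''_k ∂/∂x'_k is the total time derivative operator along the jet variables. -/

import Mathlib

open Function

variable {n : ℕ}

/-- Partial derivative w.r.t. time of a function of (t, x, x'). -/
noncomputable def pT3 (f : ℝ → (Fin n → ℝ) → (Fin n → ℝ) → ℝ) (t : ℝ) (x v : Fin n → ℝ) : ℝ :=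
  deriv (fun s => f s x v) t

/-- Partial derivative w.r.t. x_i of a function of (t, x, x'). -/
noncomputable def pX3 (f : ℝ → (Fin n → ℝ) → (Fin n → ℝ) → ℝ) (i : Fin n) (t : ℝ)
    (x v : Fin n → ℝ) : ℝ :=
  deriv (fun s => f t (Function.update x i s) v) (x i)

/-- Partial derivative w.r.t. x'_i of a function of (t, x, x'). -/
noncomputable def pV3 (f : ℝ → (Fin n → ℝ) → (Fin n → ℝ) → ℝ) (i : Fin n) (t : ℝ)
    (x v : Fin n → ℝ) : ℝ :=
  deriv (fun s => f t x (Function.update v i s)) (v i)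

/-- Partial derivative w.r.t. time of a function of (t, x, x', x''). -/
noncomputable def pT4 (F : ℝ → (Fin n → ℝ) → (Fin n → ℝ) → (Fin n → ℝ) → ℝ) (t : ℝ)
    (x v a : Fin n → ℝ) : ℝ :=
  deriv (fun s => F s x v a) t

/-- Partial derivative w.r.t. x_i of a function of (t, x, x', x''). -/
noncomputable def pX4 (F : ℝ → (Fin n → ℝ) → (Fin n → ℝ) → (Fin n → ℝ) → ℝ) (i : Fin n) (t : ℝ)
    (x v a : Fin n → ℝ) : ℝ :=
  deriv (fun s => F t (Function.update x i s) v a) (x i)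

/-- Partial derivative w.r.t. x'_i of a function of (t, x, x', x''). -/
noncomputable def pV4 (F : ℝ → (Fin n → ℝ) → (Fin n → ℝ) → (Fin n → ℝ) → ℝ) (i : Fin n) (t : ℝ)
    (x v a : Fin n → ℝ) : ℝ :=
  deriv (fun s => F t x (Function.update v i s) a) (v i)

/-- Partial derivative w.r.t. x''_i of a function of (t, x, x', x''). -/
noncomputable def pA4 (F : ℝ → (Fin n → ℝ) → (Fin n → ℝ) → (Fin n → ℝ) → ℝ) (i : Fin n) (t : ℝ)
    (x v a : Fin n → ℝ) : ℝ :=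
  deriv (fun s => F t x v (Function.update a i s)) (a i)

/-- The Euler–Lagrange expression E_i of a Lagrangian L(t,x,x'), viewed as a function of
(t, x, x', x''):  E_i = ∂²L/∂x'_i∂t + Σ_j (∂²L/∂x'_i∂x_j) x'_j + Σ_j (∂²L/∂x'_i∂x'_j) x''_j
  - ∂L/∂x_i. -/
noncomputable def EulerLagrange (L : ℝ → (Fin n → ℝ) → (Fin n → ℝ) → ℝ) (i : Fin n) (t : ℝ)
    (x v a : Fin n → ℝ) : ℝ :=
  pT3 (pV3 L i) t x v + (∑ j, pX3 (pV3 L i) j t x v * v j)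
    + (∑ j, pV3 (pV3 L i) j t x v * a j) - pX3 L i t x v

/-- The total time derivative D_t = ∂/∂t + Σ_k x'_k ∂/∂x_k + Σ_k x''_k ∂/∂x'_k acting on a
function of (t, x, x', x''). -/
noncomputable def Dt4 (F : ℝ → (Fin n → ℝ) → (Fin n → ℝ) → (Fin n → ℝ) → ℝ) (t : ℝ)
    (x v a : Fin n → ℝ) : ℝ :=
  pT4 F t x v a + (∑ k, v k * pX4 F k t x v a) + (∑ k, a k * pV4 F k t x v a)

/-- The total time derivative including the Σ_k x'''_k ∂/∂x''_k term, with x''' = b a free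
variable. -/
noncomputable def Dt5 (F : ℝ → (Fin n → ℝ) → (Fin n → ℝ) → (Fin n → ℝ) → ℝ) (b : Fin n → ℝ)
    (t : ℝ) (x v a : Fin n → ℝ) : ℝ :=
  Dt4 F t x v a + ∑ k, b k * pA4 F k t x v a

abbrev EE (n : ℕ) := ℝ × (Fin n → ℝ) × (Fin n → ℝ)

noncomputable def dTv (n : ℕ) : EE n := (1, 0, 0)
noncomputable def dXv (i : Fin n) : EE n := (0, Pi.single i 1, 0)
noncomputable def dVv (i : Fin n) : EE n := (0, 0, Pi.single i 1)

lemma hasDerivAt_updateFun (x : Fin n → ℝ) (i : Fin n) (s : ℝ) :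
    HasDerivAt (fun u => Function.update x i u) (Pi.single i 1) s := by
  rw [hasDerivAt_pi]
  intro k
  by_cases h : k = i
  · subst h
    simp only [Function.update_self, Pi.single_eq_same]
    exact hasDerivAt_id s
  · simp only [Function.update_of_ne h, Pi.single_eq_of_ne h]
    exact hasDerivAt_const s _

lemma hasDerivAt_curveT (x v : Fin n → ℝ) (t : ℝ) :
    HasDerivAt (fun s => ((s, x, v) : EE n)) (dTv n) t :=
  (hasDerivAt_id t).prodMk (hasDerivAt_const t (x, v))

lemma hasDerivAt_curveX (t : ℝ) (x v : Fin n → ℝ) (i : Fin n) (s : ℝ) :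
    HasDerivAt (fun u => ((t, Function.update x i u, v) : EE n)) (dXv i) s :=
  (hasDerivAt_const s t).prodMk ((hasDerivAt_updateFun x i s).prodMk (hasDerivAt_const s v))

lemma hasDerivAt_curveV (t : ℝ) (x v : Fin n → ℝ) (i : Fin n) (s : ℝ) :
    HasDerivAt (fun u => ((t, x, Function.update v i u) : EE n)) (dVv i) s :=
  (hasDerivAt_const s t).prodMk ((hasDerivAt_const s x).prodMk (hasDerivAt_updateFun v i s))

noncomputable section ELAux

open ContinuousLinearMap in
theorem clm_apply_apply {w : EE n} {M : EE n →L[ℝ] ℝ} :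
    ContinuousLinearMap.apply ℝ ℝ w M = M w := rfl

variable (L : ℝ → (Fin n → ℝ) → (Fin n → ℝ) → ℝ)

def Fc : EE n → ℝ := fun p => L p.1 p.2.1 p.2.2
def D1 : EE n → EE n →L[ℝ] ℝ := fderiv ℝ (Fc L)
def D2 : EE n → EE n →L[ℝ] EE n →L[ℝ] ℝ := fderiv ℝ (D1 L)
def D3 : EE n → EE n →L[ℝ] EE n →L[ℝ] EE n →L[ℝ] ℝ := fderiv ℝ (D2 L)

variable {L}
variable (hF : ContDiff ℝ 3 (Fc L))

include hF in
lemma hd0 : Differentiable ℝ (Fc L) := hF.differentiable (by norm_num)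

include hF in
lemma hC1 : ContDiff ℝ 2 (D1 L) := hF.fderiv_right (by norm_num)

include hF in
lemma hd1 : Differentiable ℝ (D1 L) := (hC1 hF).differentiable (by norm_num)

include hF in
lemma hC2 : ContDiff ℝ 1 (D2 L) := (hC1 hF).fderiv_right (by norm_num)

include hF in
lemma hd2 : Differentiable ℝ (D2 L) := (hC2 hF).differentiable (by norm_num)

include hF in
/-- Derivative of `Fc L` along a curve. -/
lemma H1 {c : ℝ → EE n} {z : EE n} {s : ℝ} (hc : HasDerivAt c z s) :
    HasDerivAt (fun r => Fc L (c r)) (D1 L (c s) z) s :=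
  ((hd0 hF (c s)).hasFDerivAt).comp_hasDerivAt s hc

lemma clm_comp_hasFDerivAt {M N : Type*} [NormedAddCommGroup M] [NormedSpace ℝ M]
    [NormedAddCommGroup N] [NormedSpace ℝ N] (A : M →L[ℝ] N) {g : EE n → M} {p : EE n}
    (hg : DifferentiableAt ℝ g p) :
    HasFDerivAt (fun q => A (g q)) (A.comp (fderiv ℝ g p)) p :=
  A.hasFDerivAt.comp p hg.hasFDerivAt

include hF in
/-- `HasFDerivAt` for `fun p => D1 L p w`. -/
lemma FD2 (w : EE n) (p : EE n) :
    HasFDerivAt (fun q => D1 L q w)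
      ((ContinuousLinearMap.apply ℝ ℝ w).comp (D2 L p)) p := by
  have h := clm_comp_hasFDerivAt (g := D1 L) (ContinuousLinearMap.apply ℝ ℝ w) (hd1 hF p)
  exact h

include hF in
/-- `HasFDerivAt` for `fun p => D2 L p u w`. -/
lemma FD3 (u w : EE n) (p : EE n) :
    HasFDerivAt (fun q => D2 L q u w)
      (((ContinuousLinearMap.apply ℝ ℝ w).comp
        (ContinuousLinearMap.apply ℝ (EE n →L[ℝ] ℝ) u)).comp (D3 L p)) p := by
  have h := clm_comp_hasFDerivAt (g := D2 L)
    ((ContinuousLinearMap.apply ℝ ℝ w).comp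
      (ContinuousLinearMap.apply ℝ (EE n →L[ℝ] ℝ) u)) (hd2 hF p)
  exact h

include hF in
/-- Derivative of `fun p => D1 L p w` along a curve. -/
lemma H2 (w : EE n) {c : ℝ → EE n} {z : EE n} {s : ℝ} (hc : HasDerivAt c z s) :
    HasDerivAt (fun r => D1 L (c r) w) (D2 L (c s) z w) s := by
  have h := (FD2 hF w (c s)).comp_hasDerivAt s hc
  exact h

include hF in
/-- Derivative of `fun p => D2 L p u w` along a curve. -/
lemma H3 (u w : EE n) {c : ℝ → EE n} {z : EE n} {s : ℝ} (hc : HasDerivAt c z s) :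
    HasDerivAt (fun r => D2 L (c r) u w) (D3 L (c s) z u w) s := by
  have h := (FD3 hF u w (c s)).comp_hasDerivAt s hc
  exact h

include hF in
/-- Schwarz symmetry for the second derivative. -/
lemma S2 (p u w : EE n) : D2 L p u w = D2 L p w u :=
  second_derivative_symmetric (f := Fc L) (f' := D1 L) (f'' := D2 L p)
    (fun y => (hd0 hF y).hasFDerivAt) (hd1 hF p).hasFDerivAt u w

include hF in
/-- Third derivative: swap the first two directions. -/
lemma S3a (p z u w : EE n) : D3 L p z u w = D3 L p u z w := by
  have hf : ∀ y, HasFDerivAt (fun q => D1 L q w)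
      ((ContinuousLinearMap.apply ℝ ℝ w).comp (D2 L y)) y := fun y => FD2 hF w y
  have hx' := clm_comp_hasFDerivAt (g := D2 L)
    (ContinuousLinearMap.compL ℝ (EE n) (EE n →L[ℝ] ℝ) ℝ
      (ContinuousLinearMap.apply ℝ ℝ w)) (hd2 hF p)
  have hx : HasFDerivAt (fun y => (ContinuousLinearMap.apply ℝ ℝ w).comp (D2 L y))
      ((ContinuousLinearMap.compL ℝ (EE n) (EE n →L[ℝ] ℝ) ℝ
        (ContinuousLinearMap.apply ℝ ℝ w)).comp (D3 L p)) p := by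
    exact hx'
  have h := second_derivative_symmetric hf hx z u
  simpa only [ContinuousLinearMap.comp_apply, ContinuousLinearMap.compL_apply,
    ContinuousLinearMap.apply_apply] using h

include hF in
/-- `fderiv` form for third directional derivatives. -/
lemma E3 (p u w z : EE n) : fderiv ℝ (fun q => D2 L q u w) p z = D3 L p z u w := by
  rw [(FD3 hF u w p).fderiv]
  simp only [ContinuousLinearMap.comp_apply, ContinuousLinearMap.apply_apply]

include hF in
/-- Third derivative: swap the last two directions. -/
lemma S3b (p z u w : EE n) : D3 L p z u w = D3 L p z w u := by
  have e2 : (fun q => D2 L q u w) = fun q => D2 L q w u := funext fun q => S2 hF q u w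
  rw [← E3 hF p u w z, e2, E3 hF p w u z]

end ELAux

noncomputable section Reduce

variable {L : ℝ → (Fin n → ℝ) → (Fin n → ℝ) → ℝ} (hF : ContDiff ℝ 3 (Fc L))

include hF

lemma pV3_eq (k : Fin n) (t : ℝ) (x v : Fin n → ℝ) :
    pV3 L k t x v = D1 L (t, x, v) (dVv k) := by
  have h := H1 hF (hasDerivAt_curveV t x v k (v k))
  simp only [Function.update_eq_self] at h
  exact h.deriv

lemma pX3_eq (k : Fin n) (t : ℝ) (x v : Fin n → ℝ) :
    pX3 L k t x v = D1 L (t, x, v) (dXv k) := by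
  have h := H1 hF (hasDerivAt_curveX t x v k (x k))
  simp only [Function.update_eq_self] at h
  exact h.deriv

lemma pTV_eq (i : Fin n) (t : ℝ) (x v : Fin n → ℝ) :
    pT3 (pV3 L i) t x v = D2 L (t, x, v) (dTv n) (dVv i) := by
  unfold pT3
  simp only [pV3_eq hF]
  exact (H2 hF (dVv i) (hasDerivAt_curveT x v t)).deriv

lemma pXV_eq (k i : Fin n) (t : ℝ) (x v : Fin n → ℝ) :
    pX3 (pV3 L i) k t x v = D2 L (t, x, v) (dXv k) (dVv i) := by
  unfold pX3
  simp only [pV3_eq hF]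
  have h := H2 hF (dVv i) (hasDerivAt_curveX t x v k (x k))
  simp only [Function.update_eq_self] at h
  exact h.deriv

lemma pVV_eq (k i : Fin n) (t : ℝ) (x v : Fin n → ℝ) :
    pV3 (pV3 L i) k t x v = D2 L (t, x, v) (dVv k) (dVv i) := by
  show deriv (fun s => pV3 L i t x (Function.update v k s)) (v k) = _
  simp only [pV3_eq hF]
  have h := H2 hF (dVv i) (hasDerivAt_curveV t x v k (v k))
  simp only [Function.update_eq_self] at h
  exact h.deriv

lemma EL_eq (i : Fin n) (t : ℝ) (x v a : Fin n → ℝ) :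
    EulerLagrange L i t x v a =
      D2 L (t, x, v) (dTv n) (dVv i) + (∑ k, D2 L (t, x, v) (dXv k) (dVv i) * v k)
        + (∑ k, D2 L (t, x, v) (dVv k) (dVv i) * a k) - D1 L (t, x, v) (dXv i) := by
  unfold EulerLagrange
  simp only [pTV_eq hF, pXV_eq hF, pVV_eq hF, pX3_eq hF]

lemma pA4_EL (j i : Fin n) (t : ℝ) (x v a : Fin n → ℝ) :
    pA4 (EulerLagrange L j) i t x v a = D2 L (t, x, v) (dVv i) (dVv j) := by
  unfold pA4
  simp only [EL_eq hF]
  have hs : HasDerivAt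
      (fun s => ∑ k, D2 L (t, x, v) (dVv k) (dVv j) * Function.update a i s k)
      (∑ k, D2 L (t, x, v) (dVv k) (dVv j) * (Pi.single i 1 : Fin n → ℝ) k) (a i) :=
    HasDerivAt.fun_sum fun k _ =>
      (hasDerivAt_pi.1 (hasDerivAt_updateFun a i (a i)) k).const_mul _
  have h := ((hasDerivAt_const (a i)
      (D2 L (t, x, v) (dTv n) (dVv j) + ∑ k, D2 L (t, x, v) (dXv k) (dVv j) * v k)).fun_add
    hs).fun_sub (hasDerivAt_const (a i) (D1 L (t, x, v) (dXv j)))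
  rw [h.deriv]
  simp [Pi.single_apply, mul_ite]

lemma pV4_EL (i j : Fin n) (t : ℝ) (x v a : Fin n → ℝ) :
    pV4 (EulerLagrange L i) j t x v a =
      D3 L (t, x, v) (dVv j) (dTv n) (dVv i)
        + (∑ k, (D3 L (t, x, v) (dVv j) (dXv k) (dVv i) * v k
            + D2 L (t, x, v) (dXv k) (dVv i) * (Pi.single j 1 : Fin n → ℝ) k))
        + (∑ k, D3 L (t, x, v) (dVv j) (dVv k) (dVv i) * a k)
        - D2 L (t, x, v) (dVv j) (dXv i) := by
  unfold pV4
  simp only [EL_eq hF]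
  have hc := hasDerivAt_curveV t x v j (v j)
  have h1 := H3 hF (dTv n) (dVv i) hc
  have h2 := HasDerivAt.fun_sum fun k (_ : k ∈ Finset.univ) =>
    (H3 hF (dXv k) (dVv i) hc).mul (hasDerivAt_pi.1 (hasDerivAt_updateFun v j (v j)) k)
  have h3 := HasDerivAt.fun_sum fun k (_ : k ∈ Finset.univ) =>
    (H3 hF (dVv k) (dVv i) hc).mul_const (a k)
  have h4 := H2 hF (dXv i) hc
  have h := ((h1.add h2).add h3).sub h4
  simp only [Function.update_eq_self] at h
  exact h.deriv

lemma pT4_G (i j : Fin n) (t : ℝ) (x v a : Fin n → ℝ) :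
    pT4 (fun t x v a => pA4 (EulerLagrange L j) i t x v a) t x v a
      = D3 L (t, x, v) (dTv n) (dVv i) (dVv j) := by
  unfold pT4
  simp only [pA4_EL hF]
  exact (H3 hF (dVv i) (dVv j) (hasDerivAt_curveT x v t)).deriv

lemma pX4_G (k i j : Fin n) (t : ℝ) (x v a : Fin n → ℝ) :
    pX4 (fun t x v a => pA4 (EulerLagrange L j) i t x v a) k t x v a
      = D3 L (t, x, v) (dXv k) (dVv i) (dVv j) := by
  unfold pX4
  simp only [pA4_EL hF]
  have h := H3 hF (dVv i) (dVv j) (hasDerivAt_curveX t x v k (x k))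
  simp only [Function.update_eq_self] at h
  exact h.deriv

lemma pV4_G (k i j : Fin n) (t : ℝ) (x v a : Fin n → ℝ) :
    pV4 (fun t x v a => pA4 (EulerLagrange L j) i t x v a) k t x v a
      = D3 L (t, x, v) (dVv k) (dVv i) (dVv j) := by
  unfold pV4
  simp only [pA4_EL hF]
  have h := H3 hF (dVv i) (dVv j) (hasDerivAt_curveV t x v k (v k))
  simp only [Function.update_eq_self] at h
  exact h.deriv

end Reduce

/-- H3 is necessary: the Euler–Lagrange expressions of a C³ Lagrangian satisfy
∂E_i/∂x'_j + ∂E_j/∂x'_i = 2 D_t(∂E_j/∂x''_i). -/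
theorem helmholtz_H3_necessary (n : ℕ) (L : ℝ → (Fin n → ℝ) → (Fin n → ℝ) → ℝ)
    (hL : ContDiff ℝ 3 (fun p : ℝ × (Fin n → ℝ) × (Fin n → ℝ) => L p.1 p.2.1 p.2.2)) :
    ∀ (i j : Fin n) (t : ℝ) (x v a : Fin n → ℝ),
      pV4 (EulerLagrange L i) j t x v a + pV4 (EulerLagrange L j) i t x v a
        = 2 * Dt4 (fun t x v a => pA4 (EulerLagrange L j) i t x v a) t x v a := by
  have hF : ContDiff ℝ 3 (Fc L) := hL
  intro i j t x v a
  have r1 : ∀ z, D3 L (t, x, v) (dVv j) z (dVv i) = D3 L (t, x, v) z (dVv i) (dVv j) :=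
    fun z => (S3a hF (t, x, v) (dVv j) z (dVv i)).trans (S3b hF (t, x, v) z (dVv j) (dVv i))
  have r2 : ∀ z, D3 L (t, x, v) (dVv i) z (dVv j) = D3 L (t, x, v) z (dVv i) (dVv j) :=
    fun z => S3a hF (t, x, v) (dVv i) z (dVv j)
  have s1 : D2 L (t, x, v) (dVv j) (dXv i) = D2 L (t, x, v) (dXv i) (dVv j) :=
    S2 hF (t, x, v) (dVv j) (dXv i)
  have s2 : D2 L (t, x, v) (dVv i) (dXv j) = D2 L (t, x, v) (dXv j) (dVv i) :=
    S2 hF (t, x, v) (dVv i) (dXv j)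
  have e1 : ∀ (c : Fin n → ℝ) (m : Fin n),
      (∑ k, c k * (Pi.single m 1 : Fin n → ℝ) k) = c m := by
    intro c m
    simp [Pi.single_apply, mul_ite]
  rw [pV4_EL hF i j t x v a, pV4_EL hF j i t x v a]
  unfold Dt4
  rw [pT4_G hF i j t x v a]
  simp only [pX4_G hF, pV4_G hF, r1, r2, s1, s2, Finset.sum_add_distrib, e1]
  have mc1 : (∑ k, v k * D3 L (t, x, v) (dXv k) (dVv i) (dVv j))
      = ∑ k, D3 L (t, x, v) (dXv k) (dVv i) (dVv j) * v k :=
    Finset.sum_congr rfl fun k _ => mul_comm _ _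
  have mc2 : (∑ k, a k * D3 L (t, x, v) (dVv k) (dVv i) (dVv j))
      = ∑ k, D3 L (t, x, v) (dVv k) (dVv i) (dVv j) * a k :=
    Finset.sum_congr rfl fun k _ => mul_comm _ _
  rw [mc1, mc2]
  ring
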